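/- Let X be an isotropic Lévy process on ℝ^d with characteristic exponent ψ, i.e. E[exp(i⟨ξ, X_t⟩)] = exp(-t ψ(ξ)) with ψ radial. Set F_t(r) = P(‖X_t‖ ≥ √r). Then for all λ, t > 0, λ ∫_0^∞ e^{-λ r} F_t(r) dr = (2^{1-d}/Γ(d/2)) ∫_0^∞ (1 - e^{-t ψ(r√λ)}) e^{-r²/4} r^{d-1} dr. -/

import Mathlib

open MeasureTheory Real Set
open scoped InnerProductSpace

lemma gauss_cos (d : ℕ) (y : EuclideanSpace ℝ (Fin d)) :
    ∫ ξ : EuclideanSpace ℝ (Fin d), Real.exp (-‖ξ‖^2/4) * Real.cos ⟪y, ξ⟫_ℝ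
      = (4*π) ^ ((d:ℝ)/2) * Real.exp (-‖y‖^2) := by
  have hb : (0:ℝ) < (1/4 : ℂ).re := by norm_num
  have key := GaussianFourier.integral_cexp_neg_mul_sq_norm_add (V := EuclideanSpace ℝ (Fin d)) hb Complex.I y
  have hint := GaussianFourier.integrable_cexp_neg_mul_sq_norm_add (V := EuclideanSpace ℝ (Fin d)) hb Complex.I y
  have hre := integral_re (𝕜 := ℂ) hint
  rw [key] at hre
  simp only [RCLike.re_to_complex] at hre
  rw [show (4*π : ℝ) ^ ((d:ℝ)/2) * Real.exp (-‖y‖^2)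
      = (((π : ℂ)/(1/4)) ^ (Module.finrank ℝ (EuclideanSpace ℝ (Fin d)) / 2 : ℂ) *
        Complex.exp (Complex.I ^ 2 * ‖y‖^2 / (4 * (1/4)))).re from ?_, ← hre]
  · apply integral_congr_ae
    filter_upwards with ξ
    have : (-(1/4 : ℂ) * ‖ξ‖^2 + Complex.I * ⟪y, ξ⟫_ℝ)
        = Complex.mk (-‖ξ‖^2/4) (⟪y, ξ⟫_ℝ) := by
      apply Complex.ext <;> simp [← Complex.ofReal_pow] <;> try ring
    rw [this]
    simp [Complex.exp_re]
  · have h1 : ((π : ℂ)/(1/4)) = ((4*π : ℝ) : ℂ) := by push_cast; ring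
    have h2 : (Module.finrank ℝ (EuclideanSpace ℝ (Fin d)) / 2 : ℂ) = (((d:ℝ)/2 : ℝ) : ℂ) := by
      rw [finrank_euclideanSpace_fin]; push_cast; ring
    have h3 : (Complex.I ^ 2 * (‖y‖:ℂ)^2 / (4 * (1/4))) = ((-‖y‖^2 : ℝ) : ℂ) := by
      rw [Complex.I_sq]; push_cast; ring
    rw [h1, h2, h3, ← Complex.ofReal_cpow (by positivity), ← Complex.ofReal_exp,
      ← Complex.ofReal_mul, Complex.ofReal_re]

lemma layer (d : ℕ) (ν : Measure (EuclideanSpace ℝ (Fin d))) [IsProbabilityMeasure ν]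
    {lam : ℝ} (hlam : 0 < lam) :
    lam * ∫ r in Ioi (0:ℝ), Real.exp (-lam * r) * (ν {x | Real.sqrt r ≤ ‖x‖}).toReal
      = ∫ x, (1 - Real.exp (-lam * ‖x‖^2)) ∂ν := by
  set E := EuclideanSpace ℝ (Fin d)
  have hsetx : ∀ (r : ℝ) (x : E), Real.sqrt r ≤ ‖x‖ ↔ r ≤ ‖x‖^2 := fun r x => by
    rw [Real.sqrt_le_iff]
    exact ⟨fun h => h.2, fun h => ⟨norm_nonneg x, h⟩⟩
  have hmeas : ∀ r : ℝ, MeasurableSet {x : E | r ≤ ‖x‖^2} :=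
    fun r => measurableSet_le measurable_const ((measurable_norm.pow_const 2))
  set f : ℝ → E → ℝ := fun r x => ({x : E | r ≤ ‖x‖^2}).indicator (fun _ => Real.exp (-lam*r)) x
    with hf
  have hInt : Integrable (Function.uncurry f) (((volume.restrict (Ioi (0:ℝ)))).prod ν) := by
    have hmeasf : Measurable (Function.uncurry f) := by
      have : Function.uncurry f
          = ({p : ℝ × E | p.1 ≤ ‖p.2‖^2}).indicator (fun p => Real.exp (-lam * p.1)) := by
        funext p
        simp only [Function.uncurry, hf, Set.indicator, mem_setOf_eq]
      rw [this]
      exact (((measurable_fst.const_mul (-lam)).exp)).indicator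
        (measurableSet_le measurable_fst (measurable_snd.norm.pow_const 2))
    apply Integrable.mono' (g := fun p : ℝ × E => Real.exp (-lam * p.1) * 1)
    · exact Integrable.mul_prod (exp_neg_integrableOn_Ioi 0 hlam) (integrable_const 1)
    · exact hmeasf.aestronglyMeasurable
    · filter_upwards with p
      rw [mul_one, Function.uncurry, hf]
      simp only []
      rw [Real.norm_eq_abs, abs_of_nonneg (indicator_nonneg (fun _ _ => (Real.exp_pos _).le) _)]
      exact indicator_le_self' (fun _ _ => (Real.exp_pos _).le) _
  have hswap := integral_integral_swap hInt
  have hinner : ∀ x : E, ∫ r in Ioi (0:ℝ), f r x = (1 - Real.exp (-lam * ‖x‖^2))/lam := by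
    intro x
    have h1 : ∀ r : ℝ, f r x = (Iic (‖x‖^2)).indicator (fun r => Real.exp (-lam*r)) r := by
      intro r
      by_cases h : r ≤ ‖x‖^2
      · rw [hf]; simp only [indicator_of_mem (show x ∈ {x : E | r ≤ ‖x‖^2} from h),
          indicator_of_mem (show r ∈ Iic (‖x‖^2) from h)]
      · rw [hf]; simp only [indicator_of_notMem (show x ∉ {x : E | r ≤ ‖x‖^2} from h),
          indicator_of_notMem (show r ∉ Iic (‖x‖^2) from h)]
    simp_rw [h1]
    rw [MeasureTheory.integral_indicator measurableSet_Iic,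
      Measure.restrict_restrict measurableSet_Iic, Set.Iic_inter_Ioi,
      ← intervalIntegral.integral_of_le (by positivity : (0:ℝ) ≤ ‖x‖^2)]
    have hderiv : ∀ u ∈ uIcc (0:ℝ) (‖x‖^2),
        HasDerivAt (fun u : ℝ => Real.exp (-lam*u)/(-lam)) (Real.exp (-lam*u)) u := by
      intro u _
      have h1 : HasDerivAt (fun u : ℝ => -lam * u) (-lam) u := by
        simpa using (hasDerivAt_id u).const_mul (-lam)
      have h2 := (Real.hasDerivAt_exp (-lam*u)).comp u h1
      have h3 := h2.div_const (-lam)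
      refine h3.congr_deriv ?_
      rw [mul_div_assoc, div_self (neg_ne_zero.mpr hlam.ne'), mul_one]
    rw [intervalIntegral.integral_eq_sub_of_hasDerivAt hderiv
      (Continuous.intervalIntegrable (by continuity) _ _)]
    rw [mul_zero, Real.exp_zero]
    field_simp [hlam.ne']
    ring
  calc lam * ∫ r in Ioi (0:ℝ), Real.exp (-lam * r) * (ν {x | Real.sqrt r ≤ ‖x‖}).toReal
      = lam * ∫ r in Ioi (0:ℝ), ∫ x, f r x ∂ν := by
        congr 1
        apply setIntegral_congr_fun measurableSet_Ioi
        intro r _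
        show Real.exp (-lam*r) * (ν {x | Real.sqrt r ≤ ‖x‖}).toReal = ∫ x, f r x ∂ν
        have hS : {x : E | Real.sqrt r ≤ ‖x‖} = {x : E | r ≤ ‖x‖^2} := by
          ext x; exact hsetx r x
        rw [hS]
        simp only [hf]
        rw [integral_indicator_const _ (hmeas r), smul_eq_mul, mul_comm]; rfl
    _ = lam * ∫ x : E, (∫ r in Ioi (0:ℝ), f r x) ∂ν := by rw [hswap]
    _ = lam * ∫ x : E, (1 - Real.exp (-lam * ‖x‖^2))/lam ∂ν := by
        congr 1
        exact integral_congr_ae (Filter.Eventually.of_forall fun x => hinner x)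
    _ = ∫ x, (1 - Real.exp (-lam * ‖x‖^2)) ∂ν := by
        rw [integral_div]
        field_simp

lemma gauss_integrable (d : ℕ) :
    Integrable (fun ξ : EuclideanSpace ℝ (Fin d) => Real.exp (-‖ξ‖^2/4)) := by
  have hb : (0:ℝ) < (1/4 : ℂ).re := by norm_num
  have := (GaussianFourier.integrable_cexp_neg_mul_sq_norm_add
    (V := EuclideanSpace ℝ (Fin d)) hb 0 0).norm
  apply this.congr
  filter_upwards with ξ
  rw [Complex.norm_exp,
    show (-(1/4:ℂ) * ‖ξ‖^2 + 0 * ⟪(0:EuclideanSpace ℝ (Fin d)), ξ⟫_ℝ)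
      = ((-‖ξ‖^2/4 : ℝ) : ℂ) by push_cast; ring, Complex.ofReal_re]

lemma stepC (d : ℕ) (ν : Measure (EuclideanSpace ℝ (Fin d))) [IsProbabilityMeasure ν]
    (ψ : ℝ → ℝ) (t : ℝ)
    (hchar : ∀ ξ : EuclideanSpace ℝ (Fin d), ∫ x, Real.cos ⟪ξ, x⟫_ℝ ∂ν = Real.exp (-t * ψ ‖ξ‖))
    {lam : ℝ} (hlam : 0 < lam) :
    ∫ x, (1 - Real.exp (-lam * ‖x‖^2)) ∂ν
      = ((4*π) ^ ((d:ℝ)/2))⁻¹ * ∫ ξ : EuclideanSpace ℝ (Fin d),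
          Real.exp (-‖ξ‖^2/4) * (1 - Real.exp (-t * ψ (Real.sqrt lam * ‖ξ‖))) := by
  set E := EuclideanSpace ℝ (Fin d)
  set c : ℝ := (4*π) ^ ((d:ℝ)/2) with hc
  have hcpos : 0 < c := Real.rpow_pos_of_pos (by positivity) _
  have hg_int := gauss_integrable d
  have hgauss0 : ∫ ξ : E, Real.exp (-‖ξ‖^2/4) = c := by
    have := gauss_cos d 0
    simpa using this
  have hpt : ∀ x : E, 1 - Real.exp (-lam * ‖x‖^2)
      = c⁻¹ * ∫ ξ : E, Real.exp (-‖ξ‖^2/4) * (1 - Real.cos ⟪Real.sqrt lam • x, ξ⟫_ℝ) := by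
    intro x
    have hint2 : Integrable (fun ξ : E =>
        Real.exp (-‖ξ‖^2/4) * Real.cos ⟪Real.sqrt lam • x, ξ⟫_ℝ) := by
      apply Integrable.mono' hg_int
      · exact (((Real.continuous_exp.comp (by continuity)).mul
          (Real.continuous_cos.comp (continuous_const.inner continuous_id)))).aestronglyMeasurable
      · filter_upwards with ξ
        rw [Real.norm_eq_abs, abs_mul, abs_of_nonneg (Real.exp_pos _).le]
        nlinarith [abs_cos_le_one ⟪Real.sqrt lam • x, ξ⟫_ℝ, Real.exp_pos (-‖ξ‖^2/4)]
    have hsplit : ∫ ξ : E, Real.exp (-‖ξ‖^2/4) * (1 - Real.cos ⟪Real.sqrt lam • x, ξ⟫_ℝ)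
        = (∫ ξ : E, Real.exp (-‖ξ‖^2/4))
          - ∫ ξ : E, Real.exp (-‖ξ‖^2/4) * Real.cos ⟪Real.sqrt lam • x, ξ⟫_ℝ := by
      rw [← integral_sub hg_int hint2]
      congr 1; funext ξ; ring
    have hn : ‖Real.sqrt lam • x‖^2 = lam * ‖x‖^2 := by
      rw [norm_smul, Real.norm_eq_abs, abs_of_nonneg (Real.sqrt_nonneg _), mul_pow,
        Real.sq_sqrt hlam.le]
    rw [hsplit, hgauss0, gauss_cos d (Real.sqrt lam • x), hn]
    field_simp
    ring
  have hmeasF : AEStronglyMeasurable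
      (Function.uncurry fun (x : E) (ξ : E) =>
        Real.exp (-‖ξ‖^2/4) * (1 - Real.cos ⟪Real.sqrt lam • x, ξ⟫_ℝ))
      (ν.prod volume) := by
    apply Continuous.aestronglyMeasurable
    have h1 : Continuous fun p : E × E => ⟪Real.sqrt lam • p.1, p.2⟫_ℝ :=
      (continuous_fst.const_smul (Real.sqrt lam)).inner continuous_snd
    show Continuous fun p : E × E =>
      Real.exp (-‖p.2‖^2/4) * (1 - Real.cos ⟪Real.sqrt lam • p.1, p.2⟫_ℝ)
    exact (Real.continuous_exp.comp (((continuous_snd.norm.pow 2).neg).div_const 4)).mul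
      (continuous_const.sub (Real.continuous_cos.comp h1))
  have hIntF : Integrable
      (Function.uncurry fun (x : E) (ξ : E) =>
        Real.exp (-‖ξ‖^2/4) * (1 - Real.cos ⟪Real.sqrt lam • x, ξ⟫_ℝ)) (ν.prod volume) := by
    apply Integrable.mono' (g := fun p : E × E => (1:ℝ) * (2 * Real.exp (-‖p.2‖^2/4)))
    · exact Integrable.mul_prod (integrable_const (μ := ν) 1) (hg_int.const_mul 2)
    · exact hmeasF
    · filter_upwards with p
      show ‖Real.exp (-‖p.2‖^2/4) * (1 - Real.cos ⟪Real.sqrt lam • p.1, p.2⟫_ℝ)‖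
        ≤ (1:ℝ) * (2 * Real.exp (-‖p.2‖^2/4))
      rw [Real.norm_eq_abs, abs_mul, abs_of_nonneg (Real.exp_pos _).le, one_mul]
      have h2 : |1 - Real.cos ⟪Real.sqrt lam • p.1, p.2⟫_ℝ| ≤ 2 := by
        rw [abs_le]
        constructor <;>
          nlinarith [Real.neg_one_le_cos ⟪Real.sqrt lam • p.1, p.2⟫_ℝ,
            Real.cos_le_one ⟪Real.sqrt lam • p.1, p.2⟫_ℝ]
      nlinarith [Real.exp_pos (-‖p.2‖^2/4), abs_nonneg (1 - Real.cos ⟪Real.sqrt lam • p.1, p.2⟫_ℝ)]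
  have hswap := integral_integral_swap hIntF
  have hinner2 : ∀ ξ : E,
      ∫ x, Real.exp (-‖ξ‖^2/4) * (1 - Real.cos ⟪Real.sqrt lam • x, ξ⟫_ℝ) ∂ν
      = Real.exp (-‖ξ‖^2/4) * (1 - Real.exp (-t * ψ (Real.sqrt lam * ‖ξ‖))) := by
    intro ξ
    rw [integral_const_mul]
    congr 1
    have hsym : ∀ x : E, ⟪Real.sqrt lam • x, ξ⟫_ℝ = ⟪Real.sqrt lam • ξ, x⟫_ℝ := by
      intro x
      rw [real_inner_smul_left, real_inner_smul_left, real_inner_comm]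
    have hcos_int : Integrable (fun x : E => Real.cos ⟪Real.sqrt lam • ξ, x⟫_ℝ) ν := by
      apply Integrable.mono' (integrable_const (1:ℝ))
      · exact (Real.continuous_cos.comp (continuous_const.inner continuous_id)).aestronglyMeasurable
      · filter_upwards with x
        rw [Real.norm_eq_abs]
        exact abs_cos_le_one _
    calc ∫ x, (1 - Real.cos ⟪Real.sqrt lam • x, ξ⟫_ℝ) ∂ν
        = ∫ x, (1 - Real.cos ⟪Real.sqrt lam • ξ, x⟫_ℝ) ∂ν := by
          apply integral_congr_ae; filter_upwards with x; rw [hsym]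
      _ = (∫ _, (1:ℝ) ∂ν) - ∫ x, Real.cos ⟪Real.sqrt lam • ξ, x⟫_ℝ ∂ν :=
          integral_sub (integrable_const 1) hcos_int
      _ = 1 - Real.exp (-t * ψ (Real.sqrt lam * ‖ξ‖)) := by
          rw [hchar (Real.sqrt lam • ξ), integral_const]
          simp [norm_smul, abs_of_nonneg (Real.sqrt_nonneg lam)]
  calc ∫ x, (1 - Real.exp (-lam * ‖x‖^2)) ∂ν
      = ∫ x, (c⁻¹ * ∫ ξ : E, Real.exp (-‖ξ‖^2/4) * (1 - Real.cos ⟪Real.sqrt lam • x, ξ⟫_ℝ)) ∂ν := by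
        apply integral_congr_ae
        exact Filter.Eventually.of_forall hpt
    _ = c⁻¹ * ∫ x, (∫ ξ : E, Real.exp (-‖ξ‖^2/4) * (1 - Real.cos ⟪Real.sqrt lam • x, ξ⟫_ℝ)) ∂ν :=
        integral_const_mul _ _
    _ = c⁻¹ * ∫ ξ : E, (∫ x, Real.exp (-‖ξ‖^2/4) * (1 - Real.cos ⟪Real.sqrt lam • x, ξ⟫_ℝ) ∂ν) := by
        rw [hswap]
    _ = c⁻¹ * ∫ ξ : E, Real.exp (-‖ξ‖^2/4) * (1 - Real.exp (-t * ψ (Real.sqrt lam * ‖ξ‖))) := by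
        congr 1
        exact integral_congr_ae (Filter.Eventually.of_forall hinner2)

lemma polar_eq (d : ℕ) (hd : 0 < d) (g : ℝ → ℝ) :
    ∫ ξ : EuclideanSpace ℝ (Fin d), g ‖ξ‖
      = ((d:ℝ) * (Real.sqrt π ^ d / Real.Gamma ((d:ℝ)/2+1)))
        * ∫ r in Ioi (0:ℝ), r ^ ((d:ℝ)-1) * g r := by
  haveI : Nonempty (Fin d) := ⟨⟨0, hd⟩⟩
  haveI : Nontrivial (EuclideanSpace ℝ (Fin d)) :=
    Module.nontrivial_of_finrank_pos (R := ℝ)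
      (by rw [finrank_euclideanSpace_fin]; exact hd)
  have h := MeasureTheory.integral_fun_norm_addHaar
    (volume : Measure (EuclideanSpace ℝ (Fin d))) g
  rw [h]
  have hvol : (volume (Metric.ball (0:EuclideanSpace ℝ (Fin d)) 1)).toReal
      = Real.sqrt π ^ d / Real.Gamma ((d:ℝ)/2+1) := by
    rw [EuclideanSpace.volume_ball]
    rw [Fintype.card_fin, ENNReal.ofReal_one, one_pow, one_mul,
      ENNReal.toReal_ofReal]
    positivity
  simp only [finrank_euclideanSpace_fin, Measure.real, hvol, nsmul_eq_mul, smul_eq_mul]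
  rw [← mul_assoc, ← integral_const_mul, ← integral_const_mul]
  apply setIntegral_congr_fun measurableSet_Ioi
  intro r hr
  have hp : (r:ℝ) ^ (d-1:ℕ) = r ^ ((d:ℝ)-1) := by
    rw [← Real.rpow_natCast r (d-1), Nat.cast_sub hd, Nat.cast_one]
  show (d:ℝ) * (√π ^ d / Real.Gamma ((d:ℝ)/2+1)) * (r ^ (d-1:ℕ) * g r)
      = (d:ℝ) * (√π ^ d / Real.Gamma ((d:ℝ)/2+1)) * (r ^ ((d:ℝ)-1) * g r)
  rw [hp]

lemma const_eq (d : ℕ) (hd : 0 < d) :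
    ((4*π) ^ ((d:ℝ)/2))⁻¹ * ((d:ℝ) * (Real.sqrt π ^ d / Real.Gamma ((d:ℝ)/2+1)))
      = (2:ℝ) ^ (1 - (d:ℝ)) / Real.Gamma ((d:ℝ)/2) := by
  have hπ : (0:ℝ) < π := pi_pos
  have hdpos : (0:ℝ) < d := Nat.cast_pos.mpr hd
  have h1 : Real.sqrt π ^ d = π ^ ((d:ℝ)/2) := by
    rw [Real.sqrt_eq_rpow, ← Real.rpow_natCast (π ^ (1/2:ℝ)) d, ← Real.rpow_mul hπ.le]
    congr 1
    ring
  have h2 : (4*π : ℝ) ^ ((d:ℝ)/2) = 2^(d:ℝ) * π ^ ((d:ℝ)/2) := by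
    rw [Real.mul_rpow (by norm_num) hπ.le]
    congr 1
    rw [show (4:ℝ) = (2:ℝ)^(2:ℝ) by norm_num, ← Real.rpow_mul (by norm_num : (0:ℝ) ≤ 2)]
    congr 1
    ring
  have hG : (0:ℝ) < Real.Gamma ((d:ℝ)/2) := Real.Gamma_pos_of_pos (by positivity)
  have hP : (0:ℝ) < π ^ ((d:ℝ)/2) := Real.rpow_pos_of_pos hπ _
  have h2d : (0:ℝ) < (2:ℝ)^(d:ℝ) := Real.rpow_pos_of_pos (by norm_num) _
  rw [h1, h2, Real.Gamma_add_one (by positivity : ((d:ℝ)/2) ≠ 0),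
    Real.rpow_sub (by norm_num : (0:ℝ) < 2), Real.rpow_one]
  field_simp

theorem stmt_4 (d : ℕ) (hd : 0 < d)
    (μ : ℝ → Measure (EuclideanSpace ℝ (Fin d)))
    (hprob : ∀ t > (0 : ℝ), IsProbabilityMeasure (μ t))
    (ψ : ℝ → ℝ)
    (hchar : ∀ t > (0 : ℝ), ∀ ξ : EuclideanSpace ℝ (Fin d),
      ∫ x, Real.cos ⟪ξ, x⟫_ℝ ∂(μ t) = Real.exp (-t * ψ ‖ξ‖))
    (F : ℝ → ℝ → ℝ)
    (hF : ∀ t r, F t r = ((μ t) {x | Real.sqrt r ≤ ‖x‖}).toReal) :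
    ∀ lam > (0 : ℝ), ∀ t > (0 : ℝ),
      lam * ∫ r in Ioi (0 : ℝ), Real.exp (-lam * r) * F t r =
        ((2 : ℝ) ^ (1 - (d : ℝ)) / Real.Gamma ((d : ℝ) / 2)) *
          ∫ r in Ioi (0 : ℝ),
            (1 - Real.exp (-t * ψ (r * Real.sqrt lam))) *
              Real.exp (-r ^ 2 / 4) * r ^ ((d : ℝ) - 1) := by
  intro lam hlam t ht
  haveI := hprob t ht
  simp only [hF]
  rw [layer d (μ t) hlam, stepC d (μ t) ψ t (hchar t ht) hlam]
  have hp2 : (∫ ξ : EuclideanSpace ℝ (Fin d),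
        Real.exp (-‖ξ‖^2/4) * (1 - Real.exp (-t * ψ (Real.sqrt lam * ‖ξ‖))))
      = ((d:ℝ) * (Real.sqrt π ^ d / Real.Gamma ((d:ℝ)/2+1)))
        * ∫ r in Ioi (0:ℝ), r ^ ((d:ℝ)-1) *
            (Real.exp (-r^2/4) * (1 - Real.exp (-t * ψ (Real.sqrt lam * r)))) :=
    polar_eq d hd (fun s => Real.exp (-s^2/4) * (1 - Real.exp (-t * ψ (Real.sqrt lam * s))))
  rw [hp2, ← mul_assoc, const_eq d hd]
  congr 1
  apply setIntegral_congr_fun measurableSet_Ioi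
  intro r hr
  show r ^ ((d:ℝ)-1) * (Real.exp (-r^2/4) * (1 - Real.exp (-t * ψ (Real.sqrt lam * r))))
      = (1 - Real.exp (-t * ψ (r * Real.sqrt lam))) * Real.exp (-r^2/4) * r ^ ((d:ℝ)-1)
  rw [mul_comm (Real.sqrt lam) r]
  ring
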